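/- Suppose |G| is invertible in F_q. Let (a_{ij}) ∈ F^{γ×k} be a matrix whose columns are pairwise different and define t''_i = a_{i1} h_1 + ... + a_{ik} h_k for 1 ≤ i ≤ γ, where h_j = (1/|G|) Σ_{g∈G} g·f_j. Then t''_1, ..., t''_γ form a minimal separating set for F_q[V]^G consisting of invariants of degree at most n(q−1). -/

import Mathlib

open MvPolynomial

/-- The substitution action of a matrix `M` on polynomials, so that
`(polyAct M f)(v) = f (M.mulVec v)`.  Taking `M = g⁻¹` gives the action
`(g · f)(v) = f (g⁻¹ · v)` of a matrix group on the coordinate ring. -/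
noncomputable def polyAct {F : Type*} [CommSemiring F] {n : ℕ}
    (M : Matrix (Fin n) (Fin n) F) (f : MvPolynomial (Fin n) F) : MvPolynomial (Fin n) F :=
  aeval (fun i => ∑ j, C (M i j) * X j) f

/-- `f_w = (-1)^n ∏_i ∏_{a ∈ F \ {w_i}} (x_i - a)`, the indicator polynomial of `w`. -/
noncomputable def fW {F : Type*} [Field F] [Fintype F] [DecidableEq F] {n : ℕ}
    (w : Fin n → F) : MvPolynomial (Fin n) F :=
  (-1) ^ n * ∏ i, ∏ a ∈ (Finset.univ \ {w i}), (X i - C a)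

/-- `f_j = ∑_{w ∈ W_j} f_w`, the indicator polynomial of the subset `W ⊆ V`. -/
noncomputable def fOrb {F : Type*} [Field F] [Fintype F] [DecidableEq F] {n : ℕ}
    (W : Set (Fin n → F)) : MvPolynomial (Fin n) F :=
  ∑ w ∈ (Set.toFinite W).toFinset, fW w

/-- `n_j = ∏_{g ∈ G} (g · f)`, where `(g · f)(v) = f(g⁻¹ · v)`. -/
noncomputable def nInvPoly {F : Type*} [Field F] [Fintype F] {n : ℕ}
    (G : Subgroup (Matrix.GeneralLinearGroup (Fin n) F)) (f : MvPolynomial (Fin n) F) :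
    MvPolynomial (Fin n) F :=
  letI : Fintype G := Fintype.ofFinite G
  ∏ g : G, polyAct (((g : Matrix.GeneralLinearGroup (Fin n) F)⁻¹ :
      Matrix.GeneralLinearGroup (Fin n) F) : Matrix (Fin n) (Fin n) F) f

/-- The Reynolds average `h = (1/|G|) ∑_{g ∈ G} (g · f)`. -/
noncomputable def reynolds {F : Type*} [Field F] [Fintype F] {n : ℕ}
    (G : Subgroup (Matrix.GeneralLinearGroup (Fin n) F)) (f : MvPolynomial (Fin n) F) :
    MvPolynomial (Fin n) F :=
  letI : Fintype G := Fintype.ofFinite G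
  C ((Nat.card G : F)⁻¹) * ∑ g : G, polyAct (((g : Matrix.GeneralLinearGroup (Fin n) F)⁻¹ :
      Matrix.GeneralLinearGroup (Fin n) F) : Matrix (Fin n) (Fin n) F) f

/-- A monomial matrix: exactly one nonzero entry in each row and in each column. -/
def IsMonomialMatrix {F : Type*} [Zero F] {n : ℕ} (M : Matrix (Fin n) (Fin n) F) : Prop :=
  (∀ i, ∃! j, M i j ≠ 0) ∧ (∀ j, ∃! i, M i j ≠ 0)

section Helpers

set_option linter.unusedSectionVars false

variable {F : Type*} [Field F] [Fintype F] [DecidableEq F] {n : ℕ}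

lemma eval_polyAct (M : Matrix (Fin n) (Fin n) F) (f : MvPolynomial (Fin n) F)
    (v : Fin n → F) : eval v (polyAct M f) = eval (M.mulVec v) f := by
  unfold polyAct
  rw [aeval_def, eval₂_comp_left (eval v)]
  rw [eval_eq]
  simp [eval₂_eq, Matrix.mulVec, dotProduct]

lemma polyAct_polyAct (M N : Matrix (Fin n) (Fin n) F) (f : MvPolynomial (Fin n) F) :
    polyAct M (polyAct N f) = polyAct (N * M) f := by
  unfold polyAct
  rw [← AlgHom.comp_apply, comp_aeval]
  have h : (fun i => (aeval fun i => ∑ j : Fin n, C (M i j) * X j)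
      (∑ j : Fin n, C (N i j) * X j)) =
      (fun i => ∑ j : Fin n, (C ((N * M) i j) * X j : MvPolynomial (Fin n) F)) := by
    funext i
    simp only [map_sum, map_mul, aeval_C, aeval_X, algebraMap_eq, Matrix.mul_apply,
      Finset.mul_sum, Finset.sum_mul]
    rw [Finset.sum_comm]
    refine Finset.sum_congr rfl fun l _ => Finset.sum_congr rfl fun j _ => ?_
    rw [mul_assoc]
  rw [h]

lemma polyAct_C (M : Matrix (Fin n) (Fin n) F) (r : F) :
    polyAct M (C r) = C r := by
  unfold polyAct; simp [algebraMap_eq]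

/-- The nonzero constant `c` such that `fW w` evaluates to `c` at `w` and `0` elsewhere. -/
noncomputable def cc (F : Type*) [Field F] [Fintype F] [DecidableEq F] (n : ℕ) : F :=
  (-1) ^ n * (∏ b ∈ (Finset.univ \ {(0:F)}), b) ^ n

lemma cc_ne_zero : cc F n ≠ 0 := by
  unfold cc
  apply mul_ne_zero (pow_ne_zero _ (neg_ne_zero.mpr one_ne_zero))
  apply pow_ne_zero
  rw [Finset.prod_ne_zero_iff]
  intro b hb
  simpa using (Finset.mem_sdiff.mp hb).2

lemma eval_fW (w v : Fin n → F) : eval v (fW w) = if v = w then cc F n else 0 := by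
  unfold fW cc
  simp only [map_mul, map_pow, map_neg, map_one, eval_prod, eval_sub, eval_X, eval_C]
  by_cases h : v = w
  · subst h
    rw [if_pos rfl]
    congr 1
    have hin : ∀ x : Fin n, ∏ a ∈ Finset.univ \ {v x}, (v x - a)
        = ∏ b ∈ Finset.univ \ {(0:F)}, b := by
      intro x
      refine Finset.prod_nbij' (fun a => v x - a) (fun b => v x - b)
        ?_ ?_ ?_ ?_ ?_
      · intro a ha
        simp only [Finset.mem_sdiff, Finset.mem_univ, Finset.mem_singleton, true_and] at ha ⊢
        rw [sub_eq_zero]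
        exact fun h => ha h.symm
      · intro b hb
        simp only [Finset.mem_sdiff, Finset.mem_univ, Finset.mem_singleton, true_and] at hb ⊢
        intro h
        exact hb (by linear_combination -h)
      · intro a _; ring
      · intro a _; ring
      · intro a _; rfl
    simp_rw [hin]
    rw [Finset.prod_const, Finset.card_univ, Fintype.card_fin]
  · rw [if_neg h]
    obtain ⟨i, hi⟩ : ∃ i, v i ≠ w i := Function.ne_iff.mp h
    apply mul_eq_zero_of_right
    apply Finset.prod_eq_zero (Finset.mem_univ i)
    apply Finset.prod_eq_zero (i := v i)
    · simp [Finset.mem_sdiff, hi]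
    · simp

lemma eval_fOrb (W : Set (Fin n → F)) (v : Fin n → F) :
    eval v (fOrb W) = if v ∈ (Set.toFinite W).toFinset then cc F n else 0 := by
  unfold fOrb
  rw [map_sum]
  simp_rw [eval_fW]
  rw [Finset.sum_ite_eq (Set.toFinite W).toFinset v (fun _ => cc F n)]


lemma polyAct_mul (M : Matrix (Fin n) (Fin n) F) (p q : MvPolynomial (Fin n) F) :
    polyAct M (p * q) = polyAct M p * polyAct M q := by
  unfold polyAct; exact map_mul _ _ _

lemma polyAct_sum {ι : Type*} (s : Finset ι) (M : Matrix (Fin n) (Fin n) F)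
    (f : ι → MvPolynomial (Fin n) F) :
    polyAct M (∑ i ∈ s, f i) = ∑ i ∈ s, polyAct M (f i) := by
  unfold polyAct; exact map_sum _ _ _

variable {G : Subgroup (Matrix.GeneralLinearGroup (Fin n) F)}

lemma polyAct_reynolds (h : Matrix.GeneralLinearGroup (Fin n) F) (hh : h ∈ G)
    (f : MvPolynomial (Fin n) F) :
    polyAct ((h⁻¹ : Matrix.GeneralLinearGroup (Fin n) F) : Matrix (Fin n) (Fin n) F)
      (reynolds G f) = reynolds G f := by
  letI : Fintype G := Fintype.ofFinite G
  unfold reynolds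
  rw [polyAct_mul, polyAct_C, polyAct_sum]
  refine congrArg (fun x => C ((Nat.card G : F)⁻¹) * x) ?_
  simp_rw [polyAct_polyAct]
  have key : ∀ g : G, ((g : Matrix.GeneralLinearGroup (Fin n) F)⁻¹ :
        Matrix.GeneralLinearGroup (Fin n) F).val * ((h⁻¹ :
        Matrix.GeneralLinearGroup (Fin n) F)).val =
      ((((⟨h, hh⟩ * g : G) : Matrix.GeneralLinearGroup (Fin n) F))⁻¹ :
        Matrix.GeneralLinearGroup (Fin n) F).val := by
    intro g
    simp [mul_inv_rev, Units.val_mul]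
  simp_rw [key]
  exact Fintype.sum_equiv (Equiv.mulLeft (⟨h, hh⟩ : G)) _ _ (fun g => rfl)

lemma eval_reynolds (f : MvPolynomial (Fin n) F) (v : Fin n → F) :
    letI : Fintype G := Fintype.ofFinite G
    eval v (reynolds G f) = (Nat.card G : F)⁻¹ *
      ∑ g : G, eval ((((g : Matrix.GeneralLinearGroup (Fin n) F)⁻¹ :
        Matrix.GeneralLinearGroup (Fin n) F) : Matrix (Fin n) (Fin n) F).mulVec v) f := by
  letI : Fintype G := Fintype.ofFinite G
  unfold reynolds
  rw [map_mul, eval_C, map_sum]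
  simp_rw [eval_polyAct]

lemma orbit_mem_iff (w : Fin n → F)
    (g : Matrix.GeneralLinearGroup (Fin n) F) (hg : g ∈ G) (v : Fin n → F) :
    ((g⁻¹ : Matrix.GeneralLinearGroup (Fin n) F) : Matrix (Fin n) (Fin n) F).mulVec v ∈
      {u | ∃ g' ∈ G, (g' : Matrix (Fin n) (Fin n) F).mulVec w = u} ↔
    v ∈ {u | ∃ g' ∈ G, (g' : Matrix (Fin n) (Fin n) F).mulVec w = u} := by
  constructor
  · rintro ⟨g', hg', hval⟩
    refine ⟨g * g', mul_mem hg hg', ?_⟩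
    rw [Units.val_mul, ← Matrix.mulVec_mulVec, hval, Matrix.mulVec_mulVec,
      ← Units.val_mul, mul_inv_cancel]
    simp
  · rintro ⟨g', hg', hval⟩
    refine ⟨g⁻¹ * g', mul_mem (inv_mem hg) hg', ?_⟩
    rw [Units.val_mul, ← Matrix.mulVec_mulVec, hval]

lemma eval_reynolds_fOrb (hG : (Nat.card G : F) ≠ 0) (w : Fin n → F) (v : Fin n → F) :
    eval v (reynolds G (fOrb {u | ∃ g' ∈ G, (g' : Matrix (Fin n) (Fin n) F).mulVec w = u})) =
      if v ∈ (Set.toFinite {u | ∃ g' ∈ G,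
          (g' : Matrix (Fin n) (Fin n) F).mulVec w = u}).toFinset
      then cc F n else 0 := by
  letI : Fintype G := Fintype.ofFinite G
  rw [eval_reynolds]
  have : ∀ g : G, eval ((((g : Matrix.GeneralLinearGroup (Fin n) F)⁻¹ :
        Matrix.GeneralLinearGroup (Fin n) F) : Matrix (Fin n) (Fin n) F).mulVec v)
        (fOrb {u | ∃ g' ∈ G, (g' : Matrix (Fin n) (Fin n) F).mulVec w = u}) =
      if v ∈ (Set.toFinite {u | ∃ g' ∈ G,
          (g' : Matrix (Fin n) (Fin n) F).mulVec w = u}).toFinset then cc F n else 0 := by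
    intro g
    rw [eval_fOrb]
    congr 1
    simp only [eq_iff_iff, Set.Finite.mem_toFinset]
    exact orbit_mem_iff w (g : Matrix.GeneralLinearGroup (Fin n) F) g.2 v
  simp_rw [this]
  rw [Finset.sum_const, Finset.card_univ, nsmul_eq_mul, ← mul_assoc]
  rw [← Nat.card_eq_fintype_card, inv_mul_cancel₀ hG, one_mul]

lemma totalDegree_polyAct_le (M : Matrix (Fin n) (Fin n) F) (f : MvPolynomial (Fin n) F) :
    (polyAct M f).totalDegree ≤ f.totalDegree := by
  unfold polyAct
  rw [aeval_def, eval₂_eq]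
  refine (totalDegree_finset_sum _ _).trans (Finset.sup_le fun d hd => ?_)
  refine (totalDegree_mul _ _).trans ?_
  have h1 : (algebraMap F (MvPolynomial (Fin n) F) (coeff d f)).totalDegree = 0 := by
    rw [algebraMap_eq]; exact totalDegree_C _
  rw [h1, zero_add]
  refine (totalDegree_finset_prod _ _).trans ?_
  have h2 : ∀ i : Fin n, ((∑ j, C (M i j) * X j : MvPolynomial (Fin n) F)).totalDegree ≤ 1 :=
    fun i => (totalDegree_finset_sum _ _).trans (Finset.sup_le fun j _ =>
      (totalDegree_mul _ _).trans (by simp [totalDegree_C, totalDegree_X]))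
  calc ∑ i ∈ d.support, ((∑ j, C (M i j) * X j : MvPolynomial (Fin n) F) ^ d i).totalDegree
      ≤ ∑ i ∈ d.support, d i := by
        refine Finset.sum_le_sum fun i _ => (totalDegree_pow _ _).trans ?_
        calc d i * (∑ j, C (M i j) * X j : MvPolynomial (Fin n) F).totalDegree
            ≤ d i * 1 := Nat.mul_le_mul_left _ (h2 i)
          _ = d i := mul_one _
    _ ≤ f.totalDegree := by
        rw [show ∑ i ∈ d.support, d i = d.sum fun _ e => e from rfl]
        exact le_totalDegree hd

lemma totalDegree_fW_le (w : Fin n → F) :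
    (fW w).totalDegree ≤ n * (Fintype.card F - 1) := by
  unfold fW
  refine (totalDegree_mul _ _).trans ?_
  have h1 : ((-1 : MvPolynomial (Fin n) F) ^ n).totalDegree = 0 := by
    rw [show ((-1 : MvPolynomial (Fin n) F)) = C (-1) by simp, ← map_pow, totalDegree_C]
  rw [h1, zero_add]
  refine (totalDegree_finset_prod _ _).trans ?_
  calc ∑ i : Fin n, (∏ a ∈ Finset.univ \ {w i}, (X i - C a)).totalDegree
      ≤ ∑ i : Fin n, (Fintype.card F - 1) := by
        refine Finset.sum_le_sum fun i _ => ?_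
        refine (totalDegree_finset_prod _ _).trans ?_
        calc ∑ a ∈ Finset.univ \ {w i}, (X i - C a).totalDegree
            ≤ ∑ a ∈ Finset.univ \ {w i}, 1 := by
              refine Finset.sum_le_sum fun a _ => ?_
              refine (totalDegree_sub _ _).trans ?_
              simp [totalDegree_X, totalDegree_C]
          _ = Fintype.card F - 1 := by
              rw [Finset.sum_const, smul_eq_mul, mul_one,
                Finset.card_sdiff_of_subset (by simp), Finset.card_singleton, Finset.card_univ]
    _ = n * (Fintype.card F - 1) := by
        rw [Finset.sum_const, Finset.card_univ, Fintype.card_fin, smul_eq_mul]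

end Helpers

/-- if `|G|` is invertible in `F_q` and `(a i j)` has pairwise different
columns, then `t''_i = a_{i1} h_1 + ⋯ + a_{ik} h_k` (`1 ≤ i ≤ γ`), with `h_j` the
Reynolds averages of the `f_j`, form a minimal separating set for `F_q[V]^G`
consisting of invariants of degree ≤ `n(q-1)`. -/
theorem stmt8 {q n k : ℕ} (F : Type*) [Field F] [Fintype F] [DecidableEq F]
    (hq : Fintype.card F = q)
    (G : Subgroup (Matrix.GeneralLinearGroup (Fin n) F))
    (hG : (Nat.card G : F) ≠ 0)
    (W : Fin k → Set (Fin n → F))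
    (horb : ∀ j, ∃ w : Fin n → F, W j =
      {u | ∃ g ∈ G, (g : Matrix (Fin n) (Fin n) F).mulVec w = u})
    (hcover : ∀ v : Fin n → F, ∃ j, v ∈ W j)
    (hdisj : ∀ j₁ j₂, j₁ ≠ j₂ → Disjoint (W j₁) (W j₂))
    (a : Fin (Nat.clog q k) → Fin k → F)
    (hcols : ∀ j₁ j₂ : Fin k, j₁ ≠ j₂ → ∃ i, a i j₁ ≠ a i j₂) :
    let t'' : Fin (Nat.clog q k) → MvPolynomial (Fin n) F :=
      fun i => ∑ j, C (a i j) * reynolds G (fOrb (W j))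
    -- the t''_i are invariants
    (∀ i, ∀ g ∈ G,
      polyAct ((g⁻¹ : Matrix.GeneralLinearGroup (Fin n) F) : Matrix (Fin n) (Fin n) F)
        (t'' i) = t'' i) ∧
    -- the t''_i form a separating set
    (∀ u v : Fin n → F,
      (¬ ∃ g ∈ G, (g : Matrix (Fin n) (Fin n) F).mulVec u = v) →
      ∃ i, eval u (t'' i) ≠ eval v (t'' i)) ∧
    -- degree bound n(q-1)
    (∀ i, (t'' i).totalDegree ≤ n * (q - 1)) ∧
    -- minimality: no separating set of invariants has fewer than γ elements
    (∀ (r : ℕ) (l : Fin r → MvPolynomial (Fin n) F),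
      (∀ i, ∀ g ∈ G,
        polyAct ((g⁻¹ : Matrix.GeneralLinearGroup (Fin n) F) : Matrix (Fin n) (Fin n) F)
          (l i) = l i) →
      (∀ u v : Fin n → F,
        (¬ ∃ g ∈ G, (g : Matrix (Fin n) (Fin n) F).mulVec u = v) →
        ∃ i, eval u (l i) ≠ eval v (l i)) →
      Nat.clog q k ≤ r) := by
  classical
  intro t''
  have ht'' : ∀ i, t'' i = ∑ j, C (a i j) * reynolds G (fOrb (W j)) := fun i => rfl
  choose wrep hwrep using horb
  choose idx hidxmem using hcover
  have hidx_unique : ∀ (v : Fin n → F) (j), v ∈ W j → j = idx v := by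
    intro v j hj
    by_contra hne
    exact (Set.disjoint_left.mp (hdisj j (idx v) hne) hj) (hidxmem v)
  have hsame : ∀ u v : Fin n → F, idx u = idx v →
      ∃ g ∈ G, (g : Matrix (Fin n) (Fin n) F).mulVec u = v := by
    intro u v h
    have hu := hidxmem u
    have hv := hidxmem v
    rw [h] at hu
    rw [hwrep (idx v)] at hu hv
    obtain ⟨g₁, hg₁, hg₁e⟩ := hu
    obtain ⟨g₂, hg₂, hg₂e⟩ := hv
    refine ⟨g₂ * g₁⁻¹, mul_mem hg₂ (inv_mem hg₁), ?_⟩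
    rw [← hg₁e, Units.val_mul, Matrix.mulVec_mulVec, mul_assoc]
    rw [show ((g₁⁻¹ : Matrix.GeneralLinearGroup (Fin n) F) :
        Matrix (Fin n) (Fin n) F) * (g₁ : Matrix (Fin n) (Fin n) F) = 1 from g₁.inv_mul,
      mul_one]
    exact hg₂e
  have heval : ∀ (i) (v : Fin n → F), eval v (t'' i) = a i (idx v) * cc F n := by
    intro i v
    rw [ht'', map_sum]
    have hterm : ∀ j : Fin k, eval v (C (a i j) * reynolds G (fOrb (W j))) =
        if idx v = j then a i j * cc F n else 0 := by
      intro j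
      rw [map_mul, eval_C, hwrep j, eval_reynolds_fOrb hG]
      by_cases hj : idx v = j
      · rw [if_pos, if_pos hj]
        rw [Set.Finite.mem_toFinset]
        have := hidxmem v
        rw [hj, hwrep j] at this
        exact this
      · rw [if_neg, if_neg hj, mul_zero]
        rw [Set.Finite.mem_toFinset]
        intro hmem
        exact hj ((hidx_unique v j (by rw [hwrep j]; exact hmem))).symm
    simp_rw [hterm]
    rw [Finset.sum_ite_eq Finset.univ (idx v) (fun j => a i j * cc F n)]
    simp
  refine ⟨?_, ?_, ?_, ?_⟩
  · -- invariance
    intro i g hg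
    rw [ht'', polyAct_sum]
    refine Finset.sum_congr rfl fun j _ => ?_
    rw [polyAct_mul, polyAct_C, polyAct_reynolds g hg]
  · -- separation
    intro u v hnot
    have hne : idx u ≠ idx v := fun h => hnot (hsame u v h)
    obtain ⟨i, hi⟩ := hcols _ _ hne
    refine ⟨i, ?_⟩
    rw [heval, heval]
    exact fun hc => hi (mul_right_cancel₀ cc_ne_zero hc)
  · -- degree bound
    intro i
    rw [ht'']
    refine (totalDegree_finset_sum _ _).trans (Finset.sup_le fun j _ => ?_)
    refine (totalDegree_mul _ _).trans ?_
    rw [totalDegree_C, zero_add]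
    letI : Fintype G := Fintype.ofFinite G
    show (reynolds G (fOrb (W j))).totalDegree ≤ n * (q - 1)
    unfold reynolds
    refine (totalDegree_mul _ _).trans ?_
    rw [totalDegree_C, zero_add]
    refine (totalDegree_finset_sum _ _).trans (Finset.sup_le fun g _ => ?_)
    refine (totalDegree_polyAct_le _ _).trans ?_
    unfold fOrb
    refine (totalDegree_finset_sum _ _).trans (Finset.sup_le fun w _ => ?_)
    exact (totalDegree_fW_le w).trans_eq (by rw [hq])
  · -- minimality
    intro r l _ hsep
    have hq2 : 1 < q := by rw [← hq]; exact Fintype.one_lt_card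
    rw [Nat.clog_le_iff_le_pow hq2]
    have hmem : ∀ j, wrep j ∈ W j := fun j => by
      rw [hwrep j]; exact ⟨1, one_mem G, by simp⟩
    have hinj : Function.Injective
        (fun j : Fin k => fun i : Fin r => eval (wrep j) (l i)) := by
      intro j₁ j₂ h
      by_contra hne
      have hnotrel : ¬ ∃ g ∈ G, (g : Matrix (Fin n) (Fin n) F).mulVec (wrep j₁) = wrep j₂ := by
        rintro ⟨g, hg, he⟩
        have hin : wrep j₂ ∈ W j₁ := by rw [hwrep j₁]; exact ⟨g, hg, he⟩
        exact Set.disjoint_left.mp (hdisj j₁ j₂ hne) hin (hmem j₂)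
      obtain ⟨i, hi⟩ := hsep _ _ hnotrel
      exact hi (congrFun h i)
    have hcard := Fintype.card_le_of_injective _ hinj
    simpa [Fintype.card_fun, hq] using hcard
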